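/- For α > 0 not an integer and m ∈ ℕ, the two functions Ω₁(x,λ) := (Γ(m+α)/(Γ(m+1)Γ(α))) [((α+m)/α) M(−m,α+1,−x) M(−λ,α,x) + (λ/α) M(−m,α,−x) M(−λ+1,α+1,x)] and Ω₂(x,λ) (defined analogously with the second Frobenius solution) satisfy the normalization: the limit as x→0⁺ of −(α Ω₁(x,λ) + x ∂_x Ω₁(x,λ))/[L_m^{α−1}(0)]² equals 1/C where C = −Γ(m+α)/((λ+m+α)Γ(α)Γ(m+1)); in particular this limit is finite and nonzero for λ ≠ −m−α. -/

import Mathlib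

open Filter Topology in
/-- Generalized binomial coefficient `binom(a, m) = a(a-1)⋯(a-m+1)/m!`. -/
noncomputable def genBinom (a : ℝ) (m : ℕ) : ℝ :=
  (∏ i ∈ Finset.range m, (a - i)) / m.factorial

/-- The generalized Laguerre polynomial
`L_n^α(x) = Σ_{k=0}^n (−1)^k binom(n+α, n−k) x^k / k!`. -/
noncomputable def laguerre (n : ℕ) (α x : ℝ) : ℝ :=
  ∑ k ∈ Finset.range (n + 1),
    (-1 : ℝ) ^ k * genBinom ((n : ℝ) + α) (n - k) * x ^ k / k.factorial

/-- The rising factorial `(a)^{(k)} = a(a+1)⋯(a+k−1)`. -/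
noncomputable def risingFactorial (a : ℝ) (k : ℕ) : ℝ :=
  ∏ i ∈ Finset.range k, (a + i)

/-- Kummer's confluent hypergeometric function
`M(a,b,x) = ₁F₁(a;b;x) = Σ_{k≥0} (a)^{(k)} x^k / ((b)^{(k)} k!)`. -/
noncomputable def kummerM (a b x : ℝ) : ℝ :=
  ∑' k : ℕ, risingFactorial a k * x ^ k / (risingFactorial b k * k.factorial)

/-- The solution
`Ω₁(x,λ) = (Γ(m+α)/(Γ(m+1)Γ(α))) [((α+m)/α) M(−m,α+1,−x) M(−λ,α,x)
  + (λ/α) M(−m,α,−x) M(−λ+1,α+1,x)]`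
of the Type I exceptional Laguerre equation. -/
noncomputable def Omega1 (m : ℕ) (α lam x : ℝ) : ℝ :=
  Real.Gamma ((m : ℝ) + α) / (Real.Gamma ((m : ℝ) + 1) * Real.Gamma α) *
    ((α + (m : ℝ)) / α * kummerM (-(m : ℝ)) (α + 1) (-x) * kummerM (-lam) α x +
      lam / α * kummerM (-(m : ℝ)) α (-x) * kummerM (-lam + 1) (α + 1) x)

/-- coefficients of Kummer's series -/
noncomputable def kummerCoeff (a b : ℝ) (k : ℕ) : ℝ :=
  risingFactorial a k / (risingFactorial b k * k.factorial)

lemma risingFactorial_zero (a : ℝ) : risingFactorial a 0 = 1 := by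
  simp [risingFactorial]

lemma risingFactorial_succ (a : ℝ) (k : ℕ) :
    risingFactorial a (k + 1) = risingFactorial a k * (a + k) := by
  simp [risingFactorial, Finset.prod_range_succ]

lemma kummerCoeff_succ (a b : ℝ) (k : ℕ) :
    kummerCoeff a b (k + 1) = kummerCoeff a b k * ((a + k) / ((b + k) * (k + 1))) := by
  simp only [kummerCoeff, risingFactorial_succ, Nat.factorial_succ]
  rw [div_mul_div_comm]
  congr 1
  push_cast
  ring

open FormalMultilinearSeries in
lemma kummer_radius_top (a b : ℝ) :
    (ofScalars ℝ (kummerCoeff a b)).radius = ⊤ := by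
  by_cases ha : ∃ n : ℕ, kummerCoeff a b n = 0
  · -- coefficients eventually zero
    obtain ⟨n, hn⟩ := ha
    have hzero : ∀ k, n ≤ k → kummerCoeff a b k = 0 := by
      intro k hk
      induction k with
      | zero => simpa [Nat.le_zero.mp hk] using hn
      | succ k ih =>
        rcases Nat.lt_or_ge n (k+1) with h | h
        · rw [kummerCoeff_succ, ih (Nat.lt_succ_iff.mp h), zero_mul]
        · rw [← Nat.le_antisymm hk h]; exact hn
    refine eq_top_iff.mpr (ENNReal.le_of_forall_nnreal_lt fun r _ ↦ ?_)
    apply FormalMultilinearSeries.le_radius_of_summable_norm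
    apply summable_of_finite_support
    apply Set.Finite.subset (Set.finite_Iio n)
    intro k hk
    simp only [Function.mem_support, ne_eq] at hk
    by_contra hkn
    simp only [Set.mem_Iio, not_lt] at hkn
    exact hk (by simp [ofScalars_norm, hzero k hkn])
  · push_neg at ha
    apply ofScalars_radius_eq_top_of_tendsto
    · exact Filter.Eventually.of_forall ha
    · have key : ∀ k : ℕ, ‖kummerCoeff a b (k+1)‖ / ‖kummerCoeff a b k‖
          = |a + k| / (|b + k| * (k + 1)) := by
        intro k
        rw [kummerCoeff_succ, norm_mul, mul_comm, mul_div_assoc,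
          div_self (by simpa using ha k), mul_one]
        rw [Real.norm_eq_abs, abs_div, abs_mul]
        congr 2
        simp [abs_of_nonneg, Nat.cast_add_one_pos k |>.le]
      simp only [key]
      have htend : Filter.Tendsto (fun k : ℕ => 4 / ((k:ℝ) + 1)) Filter.atTop (nhds 0) := by
        simpa [div_eq_mul_inv] using (tendsto_one_div_add_atTop_nhds_zero_nat (𝕜 := ℝ)).const_mul 4
      refine squeeze_zero' (Filter.Eventually.of_forall fun k => by positivity) ?_ htend
      filter_upwards [Filter.eventually_ge_atTop (⌈2 * |b|⌉₊ + ⌈|a|⌉₊ + 1)] with k hk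
      have hkb : 2 * |b| ≤ (k : ℝ) := by
        calc 2 * |b| ≤ (⌈2 * |b|⌉₊ : ℝ) := Nat.le_ceil _
        _ ≤ k := by exact_mod_cast Nat.le_of_lt_succ (Nat.lt_succ_of_le (by omega))
      have hka : |a| ≤ (k : ℝ) := by
        calc |a| ≤ (⌈|a|⌉₊ : ℝ) := Nat.le_ceil _
        _ ≤ k := by exact_mod_cast (by omega : ⌈|a|⌉₊ ≤ k)
      have hk1 : (1:ℝ) ≤ k := by exact_mod_cast (by omega : 1 ≤ k)
      have h1 : |a + (k:ℝ)| ≤ 2 * k := (abs_add_le a k).trans (by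
        rw [abs_of_nonneg (by positivity : (0:ℝ) ≤ (k:ℝ))]; linarith)
      have h2 : (k:ℝ) / 2 ≤ |b + k| := by
        have h := abs_sub_abs_le_abs_sub (k:ℝ) (-b)
        rw [sub_neg_eq_add, abs_neg, abs_of_nonneg (by positivity : (0:ℝ) ≤ (k:ℝ)),
          add_comm] at h
        linarith
      have hpos : (0:ℝ) < |b + k| * (k + 1) := by
        have : (0:ℝ) < |b + k| := lt_of_lt_of_le (by linarith) h2
        positivity
      rw [div_le_div_iff₀ hpos (by positivity)]
      nlinarith [abs_nonneg (a + (k:ℝ))]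

open FormalMultilinearSeries in
lemma kummerM_eq_ofScalarsSum (a b : ℝ) :
    kummerM a b = ofScalarsSum (kummerCoeff a b) := by
  funext x
  rw [ofScalars_sum_eq, kummerM]
  refine tsum_congr fun k => ?_
  rw [smul_eq_mul, kummerCoeff, div_mul_eq_mul_div]

open FormalMultilinearSeries in
lemma kummerM_analyticAt (a b x : ℝ) : AnalyticAt ℝ (kummerM a b) x := by
  rw [kummerM_eq_ofScalarsSum]
  have hr : (0:ENNReal) < (ofScalars ℝ (kummerCoeff a b)).radius := by
    rw [kummer_radius_top a b]; exact ENNReal.zero_lt_top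
  have h := (ofScalars ℝ (kummerCoeff a b)).hasFPowerSeriesOnBall hr
  exact h.analyticAt_of_mem (by rw [kummer_radius_top a b]; exact edist_lt_top x 0)

lemma kummerM_zero (a b : ℝ) : kummerM a b 0 = 1 := by
  rw [kummerM, tsum_eq_single 0 (fun k hk => by
    simp [zero_pow hk])]
  simp [risingFactorial_zero]

lemma gamma_rising (α : ℝ) (hα : 0 < α) (m : ℕ) :
    Real.Gamma (α + m) = risingFactorial α m * Real.Gamma α := by
  induction m with
  | zero => simp [risingFactorial_zero]
  | succ m ih =>
    have h : α + ((m:ℕ) + 1 : ℕ) = (α + m) + 1 := by push_cast; ring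
    rw [h, Real.Gamma_add_one (by positivity), ih, risingFactorial_succ]
    ring

lemma laguerre_zero (m : ℕ) (α : ℝ) :
    laguerre m (α - 1) 0 = risingFactorial α m / m.factorial := by
  have hnum : (∏ i ∈ Finset.range m, ((m:ℝ) + (α - 1) - i)) = risingFactorial α m := by
    rw [risingFactorial, ← Finset.prod_range_reflect (fun j => α + (j:ℝ)) m]
    refine Finset.prod_congr rfl fun i hi => ?_
    rw [Finset.mem_range] at hi
    have h1 : m - 1 - i = m - (i + 1) := by omega
    have h2 : ((m - (i+1) : ℕ) : ℝ) = (m:ℝ) - (i+1) := by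
      rw [Nat.cast_sub (by omega)]; push_cast; ring
    simp only [h1, h2]
    ring
  rw [laguerre, Finset.sum_eq_single 0 (fun k _ hk => by simp [zero_pow hk])
    (fun h => absurd (Finset.mem_range.mpr (Nat.succ_pos m)) h)]
  simp only [pow_zero, one_mul, Nat.sub_zero, Nat.factorial_zero, Nat.cast_one, div_one,
    genBinom, hnum, mul_one]

/-- Normalization of `Ω₁`: the quasi-derivative
`lim_{x→0⁺} −(α Ω₁(x,λ) + x ∂ₓΩ₁(x,λ)) / [L_m^{α−1}(0)]²`
equals `1/C` where `C = −Γ(m+α)/((λ+m+α)Γ(α)Γ(m+1))`; in particular the limit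
is finite and nonzero for `λ ≠ −m−α`. -/
theorem omega1_normalization (m : ℕ) (hm : 1 ≤ m) (α : ℝ) (hα : 0 < α)
    (hαint : ∀ k : ℤ, α ≠ (k : ℝ)) (lam : ℝ) (hlam : lam ≠ -(m : ℝ) - α) :
    Filter.Tendsto
      (fun x : ℝ =>
        -(α * Omega1 m α lam x + x * deriv (fun y => Omega1 m α lam y) x) /
          (laguerre m (α - 1) 0) ^ 2)
      (nhdsWithin 0 (Set.Ioi 0))
      (nhds (1 / (-Real.Gamma ((m : ℝ) + α) /
        ((lam + (m : ℝ) + α) * Real.Gamma α * Real.Gamma ((m : ℝ) + 1))))) := by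
  have hA : AnalyticOnNhd ℝ (fun y => Omega1 m α lam y) Set.univ := by
    intro x _
    unfold Omega1
    refine analyticAt_const.mul (AnalyticAt.add ?_ ?_)
    · exact (analyticAt_const.mul
        ((kummerM_analyticAt (-(m:ℝ)) (α+1) (-x)).comp (analyticAt_id.neg))).mul
        (kummerM_analyticAt (-lam) α x)
    · exact (analyticAt_const.mul
        ((kummerM_analyticAt (-(m:ℝ)) α (-x)).comp (analyticAt_id.neg))).mul
        (kummerM_analyticAt (-lam+1) (α+1) x)
  have hf0 : ContinuousAt (fun y => Omega1 m α lam y) 0 := (hA 0 trivial).continuousAt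
  have hd : ContinuousAt (deriv (fun y => Omega1 m α lam y)) 0 :=
    ((hA.deriv) 0 trivial).continuousAt
  have hcont : ContinuousAt
      (fun x : ℝ =>
        -(α * Omega1 m α lam x + x * deriv (fun y => Omega1 m α lam y) x) /
          (laguerre m (α - 1) 0) ^ 2) 0 :=
    (((continuousAt_const.mul hf0).add (continuousAt_id.mul hd)).neg).div_const _
  have key := hcont.continuousWithinAt (s := Set.Ioi 0)
  have hR : 0 < risingFactorial α m := Finset.prod_pos fun i _ => by positivity
  have hΓα : 0 < Real.Gamma α := Real.Gamma_pos_of_pos hα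
  have hmf : (0:ℝ) < (m.factorial : ℝ) := by exact_mod_cast m.factorial_pos
  have hΓm1 : Real.Gamma ((m:ℝ)+1) = (m.factorial : ℝ) := by
    exact_mod_cast Real.Gamma_nat_eq_factorial m
  have hΓmα : Real.Gamma ((m:ℝ)+α) = risingFactorial α m * Real.Gamma α := by
    rw [add_comm]; exact gamma_rising α hα m
  have hlam' : lam + (m:ℝ) + α ≠ 0 := fun h => hlam (by linarith)
  have hval : -(α * Omega1 m α lam 0 + 0 * deriv (fun y => Omega1 m α lam y) 0) /
      (laguerre m (α - 1) 0) ^ 2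
      = 1 / (-Real.Gamma ((m : ℝ) + α) /
        ((lam + (m : ℝ) + α) * Real.Gamma α * Real.Gamma ((m : ℝ) + 1))) := by
    rw [laguerre_zero]
    simp only [Omega1, kummerM_zero, neg_zero, mul_one, zero_mul, add_zero, hΓm1, hΓmα]
    field_simp
    ring
  rw [ContinuousWithinAt, hval] at key
  exact key
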